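/- Let c_k : X → ℂ be defined by c_k ≡ 1 for k even, c_{4ℓ+1}(x) = (−1)^{x_{4ℓ+3}} and c_{4ℓ+3}(x) = (−1)^{x_{4ℓ+1}} for ℓ ≥ 0, and define operators on L²(X, μ_X; ℂ) by (J_k f)(x) = (−1)^{x_1+⋯+x_{k−1}+1} · i · c_k(x) · f(x+δ_k) and (J'_k f)(x) = (−1)^{x_k} · i · (J_k f)(x). Then this representation is irreducible over ℂ: the only closed complex subspaces of L²(X, μ_X; ℂ) invariant under J_k and J'_k for all k ≥ 1 are {0} and L²(X, μ_X; ℂ). -/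

import Mathlib

/-!
Common setup: `GWX` is the compact abelian group `X = ∏_{k ≥ 1} {0,1}` of 0-1 sequences
(with componentwise addition mod 2 and the product σ-algebra, which is generated by the
sets `X_k = {x : x_k = 1}`).  The coordinate `i : ℕ` of `x : GWX` represents the paper's
coordinate `x_{i+1}`, so the Lean index `k : ℕ` corresponds to the paper's index `k + 1`
throughout; in particular the paper's sign `(-1)^k` becomes `(-1)^(k+1)` here.
-/

open MeasureTheory Complex Filter
open scoped ENNReal

noncomputable section

abbrev GWX : Type := ℕ → ZMod 2

/-- `δ_k`: the sequence with `1` in the `k`-th place (the paper's `(k+1)`-th place)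
and `0` elsewhere. -/
def gwDelta (k : ℕ) : GWX := fun i => if i = k then 1 else 0

/-- The componentwise complement `x ↦ 1 - x`. -/
def gwFlip (x : GWX) : GWX := fun i => 1 - x i

/-- The sign `(-1)^{x_1 + ⋯ + x_{k-1} + 1}` of the paper, for the paper's index `k + 1`. -/
def gwSign (k : ℕ) (x : GWX) : ℂ := (-1 : ℂ) ^ ((∑ i ∈ Finset.range k, (x i).val) + 1)

/-- The functions `c_k` of Theorem 3.11: in the paper's (1-based) indexing, `c_k ≡ 1` for
`k` even, `c_{4ℓ+1}(x) = (-1)^{x_{4ℓ+3}}`, `c_{4ℓ+3}(x) = (-1)^{x_{4ℓ+1}}`.  In the Lean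
(0-based) indexing used here (`Lean k` = paper's `k+1`): `gwC k ≡ 1` for `k` odd,
`gwC k x = (-1)^{x (k+2)}` for `k ≡ 0 [MOD 4]`, and `gwC k x = (-1)^{x (k-2)}` for
`k ≡ 2 [MOD 4]`. -/
def gwC (k : ℕ) (x : GWX) : ℂ :=
  if k % 2 = 1 then 1
  else if k % 4 = 0 then (-1 : ℂ) ^ (x (k + 2)).val
  else (-1 : ℂ) ^ (x (k - 2)).val

set_option linter.unusedSectionVars false

lemma zmod2_cases (a : ZMod 2) : a = 0 ∨ a = 1 := by revert a; decide
lemma zval0 : (0 : ZMod 2).val = 0 := rfl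
lemma zval1 : (1 : ZMod 2).val = 1 := rfl
lemma zval2 : ((1 : ZMod 2) + 1).val = 0 := rfl

lemma zm_pow_add_one (a : ZMod 2) : (-1:ℂ)^((a+1).val) = -(-1:ℂ)^a.val := by
  rcases zmod2_cases a with h | h <;> subst h <;> simp [zval0, zval1, zval2]

lemma zm_pow_sq (a : ZMod 2) : (-1:ℂ)^a.val * (-1:ℂ)^a.val = 1 := by
  rcases zmod2_cases a with h | h <;> subst h <;> simp [zval0, zval1, zval2]

lemma zm_pow_ne (a b : ZMod 2) (h : a ≠ b) : (-1:ℂ)^(a.val) * (-1:ℂ)^(b.val) = -1 := by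
  rcases zmod2_cases a with h1 | h1 <;> rcases zmod2_cases b with h2 | h2 <;>
    subst h1 <;> subst h2 <;> simp [zval0, zval1, zval2] at h ⊢

lemma zm_pow_norm (a : ZMod 2) : ‖(-1:ℂ)^a.val‖ = 1 := by
  rcases zmod2_cases a with h | h <;> subst h <;> simp [zval0, zval1, zval2]

lemma zmod2_add_add (a b : ZMod 2) : a + b + b = a := by revert a b; decide

def gwchi (S : Finset ℕ) (x : GWX) : ℂ := ∏ i ∈ S, (-1:ℂ)^((x i).val)

lemma gwchi_measurable (S : Finset ℕ) : Measurable (gwchi S) :=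
  Finset.measurable_prod _ (fun i _ => (Measurable.of_discrete (f := fun a : ZMod 2 => (-1:ℂ)^a.val)).comp (measurable_pi_apply i))

lemma gwchi_norm (S : Finset ℕ) (x : GWX) : ‖gwchi S x‖ = 1 := by
  rw [gwchi, norm_prod]
  exact Finset.prod_eq_one fun i _ => zm_pow_norm _

lemma gwchi_sq (S : Finset ℕ) (x : GWX) : gwchi S x * gwchi S x = 1 := by
  rw [gwchi, ← Finset.prod_mul_distrib]
  exact Finset.prod_eq_one fun i _ => zm_pow_sq _

lemma gwchi_add_delta (S : Finset ℕ) (k : ℕ) (x : GWX) :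
    gwchi S (x + gwDelta k) = (if k ∈ S then -1 else 1) * gwchi S x := by
  by_cases hk : k ∈ S
  · simp only [hk, if_pos]
    rw [gwchi, gwchi, ← Finset.mul_prod_erase S _ hk, ← Finset.mul_prod_erase S _ hk]
    have h1 : ((x + gwDelta k) k) = x k + 1 := by simp [gwDelta]
    rw [h1, zm_pow_add_one]
    have h2 : ∀ i ∈ S.erase k, (-1:ℂ)^(((x + gwDelta k) i).val) = (-1:ℂ)^((x i).val) := by
      intro i hi
      have : (x + gwDelta k) i = x i := by
        simp [gwDelta, Finset.ne_of_mem_erase hi]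
      rw [this]
    rw [Finset.prod_congr rfl h2]; ring
  · simp only [hk, if_neg, one_mul, not_false_iff]
    refine Finset.prod_congr rfl fun i hi => ?_
    have : (x + gwDelta k) i = x i := by
      simp [gwDelta]; intro h; exact absurd (h ▸ hi) hk
    rw [this]

lemma gwSign_add_delta (k : ℕ) (x : GWX) : gwSign k (x + gwDelta k) = gwSign k x := by
  unfold gwSign
  congr 2
  refine Finset.sum_congr rfl fun i hi => ?_
  have hik : i ≠ k := by have := Finset.mem_range.mp hi; omega
  simp [gwDelta, hik]

lemma gwC_add_delta (k : ℕ) (x : GWX) : gwC k (x + gwDelta k) = gwC k x := by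
  unfold gwC
  split_ifs with h1 h2
  · rfl
  · have : (x + gwDelta k) (k+2) = x (k+2) := by simp [gwDelta]
    rw [this]
  · have hk2 : k - 2 ≠ k := by omega
    have : (x + gwDelta k) (k-2) = x (k-2) := by simp [gwDelta, hk2]
    rw [this]

lemma gwSign_sq (k : ℕ) (x : GWX) : gwSign k x * gwSign k x = 1 := by
  rw [gwSign, ← pow_add]
  exact Even.neg_one_pow ⟨_, rfl⟩

lemma gwC_sq (k : ℕ) (x : GWX) : gwC k x * gwC k x = 1 := by
  unfold gwC
  split_ifs
  · norm_num
  · exact zm_pow_sq _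
  · exact zm_pow_sq _

lemma gwSign_eq_chi (k : ℕ) (x : GWX) : gwSign k x = -gwchi (Finset.range k) x := by
  rw [gwSign, gwchi, Finset.prod_pow_eq_pow_sum, pow_succ]
  ring

def gwCset (k : ℕ) : Finset ℕ :=
  if k % 2 = 1 then ∅ else if k % 4 = 0 then {k+2} else {k-2}

lemma gwC_eq_chi (k : ℕ) (x : GWX) : gwC k x = gwchi (gwCset k) x := by
  unfold gwC gwCset
  split_ifs <;> simp [gwchi]

lemma add_delta_delta (x : GWX) (k : ℕ) : x + gwDelta k + gwDelta k = x := by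
  funext i; exact zmod2_add_add _ _

section MeasLayer

variable (μX : Measure GWX) [IsProbabilityMeasure μX]

lemma gw_measurable_addRight (y : GWX) : Measurable (fun x : GWX => x + y) :=
  measurable_pi_lambda _ fun i =>
    (Measurable.of_discrete (f := fun a : ZMod 2 => a + y i)).comp (measurable_pi_apply i)

lemma gwMP (hHaar : ∀ y : GWX, μX.map (· + y) = μX) (y : GWX) : MeasurePreserving (· + y) μX μX :=
  ⟨gw_measurable_addRight y, hHaar y⟩

lemma memℒp_bdd_mul {g : GWX → ℂ} (hg : Measurable g) (hb : ∀ x, ‖g x‖ ≤ 1)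
    (f : Lp ℂ 2 μX) : MemLp (fun x => g x * (f : GWX → ℂ) x) 2 μX :=
  MemLp.of_le (Lp.memLp f) (hg.aestronglyMeasurable.mul (Lp.aestronglyMeasurable f))
    (ae_of_all _ fun x => by
      rw [norm_mul]
      exact mul_le_of_le_one_left (norm_nonneg _) (hb x))

/-- Multiplication by a bounded measurable function, as a map on L². -/
def mulLp {g : GWX → ℂ} (hg : Measurable g) (hb : ∀ x, ‖g x‖ ≤ 1)
    (f : Lp ℂ 2 μX) : Lp ℂ 2 μX :=
  (memℒp_bdd_mul μX hg hb f).toLp _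

lemma coeFn_mulLp {g : GWX → ℂ} (hg : Measurable g) (hb : ∀ x, ‖g x‖ ≤ 1)
    (f : Lp ℂ 2 μX) :
    (mulLp μX hg hb f : GWX → ℂ) =ᵐ[μX] fun x => g x * (f : GWX → ℂ) x :=
  MemLp.coeFn_toLp _

lemma memℒp_chi (S : Finset ℕ) : MemLp (gwchi S) 2 μX :=
  MemLp.of_bound (gwchi_measurable S).aestronglyMeasurable 1
    (ae_of_all _ fun x => (gwchi_norm S x).le)

/-- The Walsh character `gwchi S` as an element of L². -/
def chiLp (S : Finset ℕ) : Lp ℂ 2 μX := (memℒp_chi μX S).toLp _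

lemma coeFn_chiLp (S : Finset ℕ) : (chiLp μX S : GWX → ℂ) =ᵐ[μX] gwchi S :=
  MemLp.coeFn_toLp _

lemma norm_chiLp_empty : ‖chiLp μX ∅‖ = 1 := by
  have h1 : gwchi (∅ : Finset ℕ) = fun _ : GWX => (1 : ℂ) := by
    funext x; simp [gwchi]
  rw [chiLp, Lp.norm_toLp, h1, eLpNorm_const (1 : ℂ) two_ne_zero (IsProbabilityMeasure.ne_zero μX)]
  simp

/-- Translation by `y` as a linear map on L². -/
def gwT (hHaar : ∀ y : GWX, μX.map (· + y) = μX) (y : GWX) : Lp ℂ 2 μX →ₗ[ℂ] Lp ℂ 2 μX :=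
  Lp.compMeasurePreservingₗ ℂ _ (gwMP μX hHaar y)

lemma coeFn_gwT (hHaar : ∀ y : GWX, μX.map (· + y) = μX) (y : GWX) (f : Lp ℂ 2 μX) :
    (gwT μX hHaar y f : GWX → ℂ) =ᵐ[μX] fun x => (f : GWX → ℂ) (x + y) :=
  Lp.coeFn_compMeasurePreserving f (gwMP μX hHaar y)

lemma norm_gwT (hHaar : ∀ y : GWX, μX.map (· + y) = μX) (y : GWX) (f : Lp ℂ 2 μX) : ‖gwT μX hHaar y f‖ = ‖f‖ :=
  Lp.norm_compMeasurePreserving f (gwMP μX hHaar y)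

lemma integral_chi (hHaar : ∀ y : GWX, μX.map (· + y) = μX) (S : Finset ℕ) :
    ∫ x, gwchi S x ∂μX = if S = ∅ then 1 else 0 := by
  by_cases hS : S = ∅
  · subst hS
    have h1 : gwchi (∅ : Finset ℕ) = fun _ : GWX => (1 : ℂ) := by
      funext x; simp [gwchi]
    rw [h1, if_pos rfl]
    simp
  · rw [if_neg hS]
    obtain ⟨k, hk⟩ := Finset.nonempty_iff_ne_empty.mpr hS
    have key : ∫ x, gwchi S x ∂μX = - ∫ x, gwchi S x ∂μX := by
      calc ∫ x, gwchi S x ∂μX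
          = ∫ x, gwchi S x ∂(μX.map (· + gwDelta k)) := by rw [hHaar (gwDelta k)]
        _ = ∫ x, gwchi S (x + gwDelta k) ∂μX :=
            integral_map (gw_measurable_addRight (gwDelta k)).aemeasurable
              (gwchi_measurable S).aestronglyMeasurable
        _ = ∫ x, -gwchi S x ∂μX := by
            refine integral_congr_ae (ae_of_all _ fun x => ?_)
            show gwchi S (x + gwDelta k) = -gwchi S x
            rw [gwchi_add_delta, if_pos hk]; ring
        _ = - ∫ x, gwchi S x ∂μX := integral_neg _
    linear_combination key / 2

lemma gwchi_conj (S : Finset ℕ) (x : GWX) :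
    (starRingEnd ℂ) (gwchi S x) = gwchi S x := by
  rw [gwchi, map_prod]
  exact Finset.prod_congr rfl fun i _ => by rw [map_pow, map_neg, map_one]

lemma integrable_chi_mul (S : Finset ℕ) (f : Lp ℂ 2 μX) :
    Integrable (fun x => gwchi S x * (f : GWX → ℂ) x) μX :=
  Integrable.bdd_mul ((Lp.memLp f).integrable one_le_two)
    (gwchi_measurable S).aestronglyMeasurable (ae_of_all _ fun x => (gwchi_norm S x).le)

lemma inner_chiLp (S : Finset ℕ) (f : Lp ℂ 2 μX) :
    (inner ℂ (chiLp μX S) f : ℂ) = ∫ x, gwchi S x * (f : GWX → ℂ) x ∂μX := by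
  rw [MeasureTheory.L2.inner_def]
  refine integral_congr_ae ?_
  filter_upwards [coeFn_chiLp μX S] with x hx
  rw [RCLike.inner_apply', hx, gwchi_conj]

end MeasLayer

section RepLayer

variable {μX : Measure GWX} [IsProbabilityMeasure μX]
  (hHaar : ∀ y : GWX, μX.map (· + y) = μX)
  {J J' : ℕ → Lp ℂ 2 μX → Lp ℂ 2 μX}
  (hJ : ∀ k f, (↑(J k f) : GWX → ℂ) =ᵐ[μX] fun x =>
    gwSign k x * Complex.I * gwC k x * (↑f : GWX → ℂ) (x + gwDelta k))

lemma gwSign_measurable (k : ℕ) : Measurable (gwSign k) := by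
  have : gwSign k = fun x => -gwchi (Finset.range k) x := funext fun x => gwSign_eq_chi k x
  rw [this]
  exact (gwchi_measurable _).neg

lemma gwSign_norm (k : ℕ) (x : GWX) : ‖gwSign k x‖ ≤ 1 := by
  rw [gwSign_eq_chi, norm_neg, gwchi_norm]

lemma gwC_measurable (k : ℕ) : Measurable (gwC k) := by
  have : gwC k = fun x => gwchi (gwCset k) x := funext fun x => gwC_eq_chi k x
  rw [this]
  exact gwchi_measurable _

lemma gwC_norm (k : ℕ) (x : GWX) : ‖gwC k x‖ ≤ 1 := by
  rw [gwC_eq_chi, gwchi_norm]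

lemma gwchi_measurable' (S : Finset ℕ) : Measurable (gwchi S) := gwchi_measurable S

lemma gwchi_norm' (S : Finset ℕ) (x : GWX) : ‖gwchi S x‖ ≤ 1 := (gwchi_norm S x).le

include hHaar hJ in
/-- `J_k² = -1`. -/
lemma gwJ_sq (k : ℕ) (f : Lp ℂ 2 μX) : J k (J k f) = -f := by
  apply Lp.ext
  have h2 := (gwMP μX hHaar (gwDelta k)).quasiMeasurePreserving.ae_eq_comp (hJ k f)
  refine ((hJ k (J k f)).trans ?_).trans (Lp.coeFn_neg f).symm
  filter_upwards [h2] with x hx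
  have hx' : (↑(J k f) : GWX → ℂ) (x + gwDelta k)
      = gwSign k (x + gwDelta k) * Complex.I * gwC k (x + gwDelta k)
        * (↑f : GWX → ℂ) (x + gwDelta k + gwDelta k) := hx
  show gwSign k x * Complex.I * gwC k x * (↑(J k f) : GWX → ℂ) (x + gwDelta k) = _
  rw [hx', gwSign_add_delta, gwC_add_delta, add_delta_delta]
  have hs := gwSign_sq k x
  have hc := gwC_sq k x
  calc gwSign k x * Complex.I * gwC k x
        * (gwSign k x * Complex.I * gwC k x * (↑f : GWX → ℂ) x)
      = (gwSign k x * gwSign k x) * (gwC k x * gwC k x) * (Complex.I * Complex.I)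
        * (↑f : GWX → ℂ) x := by ring
    _ = -(↑f : GWX → ℂ) x := by rw [hs, hc, Complex.I_mul_I]; ring

variable (hJ' : ∀ k f, (↑(J' k f) : GWX → ℂ) =ᵐ[μX] fun x =>
    (-1 : ℂ) ^ (x k).val * Complex.I * (↑(J k f) : GWX → ℂ) x)

include hHaar hJ hJ' in
/-- Multiplication by `(-1)^{x_k}` is `I • J'_k J_k`. -/
lemma gwM_eq (k : ℕ) (f : Lp ℂ 2 μX) :
    mulLp μX (gwchi_measurable' {k}) (gwchi_norm' {k}) f = Complex.I • J' k (J k f) := by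
  apply Lp.ext
  refine (coeFn_mulLp μX _ _ f).trans ?_
  have h0 : (↑(J k (J k f)) : GWX → ℂ) =ᵐ[μX] -(↑f : GWX → ℂ) := by
    rw [gwJ_sq hHaar hJ k f]; exact Lp.coeFn_neg f
  refine EventuallyEq.trans ?_ (Lp.coeFn_smul Complex.I (J' k (J k f))).symm
  filter_upwards [hJ' k (J k f), h0] with x h1 h2
  show gwchi {k} x * (↑f : GWX → ℂ) x = (Complex.I • (↑(J' k (J k f)) : GWX → ℂ)) x
  have h1' : (↑(J' k (J k f)) : GWX → ℂ) x
      = (-1 : ℂ) ^ (x k).val * Complex.I * (↑(J k (J k f)) : GWX → ℂ) x := h1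
  have h2' : (↑(J k (J k f)) : GWX → ℂ) x = -(↑f : GWX → ℂ) x := h2
  simp only [Pi.smul_apply, smul_eq_mul, h1', h2', gwchi, Finset.prod_singleton]
  have := Complex.I_mul_I
  ring_nf
  rw [Complex.I_sq]
  ring

variable (V : Submodule ℂ (Lp ℂ 2 μX))
  (hVinv : ∀ k : ℕ, ∀ f ∈ V, J k f ∈ V ∧ J' k f ∈ V)

include hHaar hJ hJ' hVinv in
lemma gw_mem_M (k : ℕ) {f : Lp ℂ 2 μX} (hf : f ∈ V) :
    mulLp μX (gwchi_measurable' {k}) (gwchi_norm' {k}) f ∈ V := by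
  rw [gwM_eq hHaar hJ hJ' k f]
  exact V.smul_mem _ ((hVinv k (J k f) (hVinv k f hf).1).2)

include hHaar hJ hJ' hVinv in
lemma gw_mem_chi (S : Finset ℕ) {f : Lp ℂ 2 μX} (hf : f ∈ V) :
    mulLp μX (gwchi_measurable' S) (gwchi_norm' S) f ∈ V := by
  induction S using Finset.induction_on generalizing f with
  | empty =>
      have : mulLp μX (gwchi_measurable' ∅) (gwchi_norm' ∅) f = f := by
        apply Lp.ext
        refine (coeFn_mulLp μX _ _ f).trans ?_
        refine ae_of_all _ fun x => ?_
        show gwchi ∅ x * (↑f : GWX → ℂ) x = (↑f : GWX → ℂ) x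
        simp [gwchi]
      rw [this]; exact hf
  | @insert a S ha ih =>
      have key : mulLp μX (gwchi_measurable' (insert a S)) (gwchi_norm' (insert a S)) f
          = mulLp μX (gwchi_measurable' {a}) (gwchi_norm' {a})
              (mulLp μX (gwchi_measurable' S) (gwchi_norm' S) f) := by
        apply Lp.ext
        refine (coeFn_mulLp μX _ _ f).trans ?_
        refine EventuallyEq.trans ?_ (coeFn_mulLp μX _ _ _).symm
        filter_upwards [coeFn_mulLp μX (gwchi_measurable' S) (gwchi_norm' S) f] with x hx
        show gwchi (insert a S) x * (↑f : GWX → ℂ) x = gwchi {a} x * _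
        rw [hx, gwchi, Finset.prod_insert ha]
        show _ = gwchi {a} x * (gwchi S x * (↑f : GWX → ℂ) x)
        rw [gwchi, Finset.prod_singleton, gwchi]
        ring
      rw [key]
      exact gw_mem_M hHaar hJ hJ' V hVinv a (ih hf)

end RepLayer

section RepLayer2

variable {μX : Measure GWX} [IsProbabilityMeasure μX]
  (hHaar : ∀ y : GWX, μX.map (· + y) = μX)
  {J J' : ℕ → Lp ℂ 2 μX → Lp ℂ 2 μX}
  (hJ : ∀ k f, (↑(J k f) : GWX → ℂ) =ᵐ[μX] fun x =>
    gwSign k x * Complex.I * gwC k x * (↑f : GWX → ℂ) (x + gwDelta k))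
  (hJ' : ∀ k f, (↑(J' k f) : GWX → ℂ) =ᵐ[μX] fun x =>
    (-1 : ℂ) ^ (x k).val * Complex.I * (↑(J k f) : GWX → ℂ) x)
  (V : Submodule ℂ (Lp ℂ 2 μX))
  (hVinv : ∀ k : ℕ, ∀ f ∈ V, J k f ∈ V ∧ J' k f ∈ V)

include hHaar hJ hJ' hVinv in
lemma gw_mem_sign (k : ℕ) {f : Lp ℂ 2 μX} (hf : f ∈ V) :
    mulLp μX (gwSign_measurable k) (gwSign_norm k) f ∈ V := by
  have key : mulLp μX (gwSign_measurable k) (gwSign_norm k) f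
      = -(mulLp μX (gwchi_measurable' (Finset.range k)) (gwchi_norm' (Finset.range k)) f) := by
    apply Lp.ext
    refine (coeFn_mulLp μX _ _ f).trans ?_
    refine EventuallyEq.trans ?_ (Lp.coeFn_neg _).symm
    filter_upwards [coeFn_mulLp μX (gwchi_measurable' (Finset.range k))
      (gwchi_norm' (Finset.range k)) f] with x hx
    show gwSign k x * (↑f : GWX → ℂ) x = -_
    rw [hx, gwSign_eq_chi]
    ring
  rw [key]
  exact V.neg_mem (gw_mem_chi hHaar hJ hJ' V hVinv _ hf)

include hHaar hJ hJ' hVinv in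
lemma gw_mem_C (k : ℕ) {f : Lp ℂ 2 μX} (hf : f ∈ V) :
    mulLp μX (gwC_measurable k) (gwC_norm k) f ∈ V := by
  have key : mulLp μX (gwC_measurable k) (gwC_norm k) f
      = mulLp μX (gwchi_measurable' (gwCset k)) (gwchi_norm' (gwCset k)) f := by
    apply Lp.ext
    refine (coeFn_mulLp μX _ _ f).trans ?_
    refine EventuallyEq.trans ?_ (coeFn_mulLp μX _ _ f).symm
    refine ae_of_all _ fun x => ?_
    show gwC k x * (↑f : GWX → ℂ) x = gwchi (gwCset k) x * (↑f : GWX → ℂ) x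
    rw [gwC_eq_chi]
  rw [key]
  exact gw_mem_chi hHaar hJ hJ' V hVinv _ hf

include hHaar hJ hJ' hVinv in
lemma gw_mem_T (k : ℕ) {f : Lp ℂ 2 μX} (hf : f ∈ V) :
    gwT μX hHaar (gwDelta k) f ∈ V := by
  have key : gwT μX hHaar (gwDelta k) f
      = (-Complex.I) • mulLp μX (gwSign_measurable k) (gwSign_norm k)
          (mulLp μX (gwC_measurable k) (gwC_norm k) (J k f)) := by
    apply Lp.ext
    refine (coeFn_gwT μX hHaar (gwDelta k) f).trans ?_
    refine EventuallyEq.trans ?_ (Lp.coeFn_smul (-Complex.I) _).symm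
    have hinner := coeFn_mulLp μX (gwC_measurable k) (gwC_norm k) (J k f)
    have houter := coeFn_mulLp μX (gwSign_measurable k) (gwSign_norm k)
      (mulLp μX (gwC_measurable k) (gwC_norm k) (J k f))
    filter_upwards [hinner, houter, hJ k f] with x h1 h2 h3
    simp only [Pi.smul_apply, smul_eq_mul]
    rw [h2, h1, h3]
    have hs := gwSign_sq k x
    have hc := gwC_sq k x
    have hI := Complex.I_mul_I
    have key2 : -Complex.I * (gwSign k x * (gwC k x *
        (gwSign k x * Complex.I * gwC k x * (↑f : GWX → ℂ) (x + gwDelta k))))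
        = ((gwSign k x * gwSign k x) * (gwC k x * gwC k x) * (-(Complex.I * Complex.I)))
          * (↑f : GWX → ℂ) (x + gwDelta k) := by ring
    rw [key2, hs, hc, hI]
    ring
  rw [key]
  exact V.smul_mem _ (gw_mem_sign hHaar hJ hJ' V hVinv k
    (gw_mem_C hHaar hJ hJ' V hVinv k (hVinv k f hf).1))

end RepLayer2

section Averaging

variable {μX : Measure GWX} [IsProbabilityMeasure μX]
  (hHaar : ∀ y : GWX, μX.map (· + y) = μX)

/-- The averaging operator `f ↦ (f + T_{δ_k} f)/2`. -/
def gwA (k : ℕ) : Lp ℂ 2 μX →ₗ[ℂ] Lp ℂ 2 μX :=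
  (2⁻¹ : ℂ) • (LinearMap.id + gwT μX hHaar (gwDelta k))

lemma gwA_apply (k : ℕ) (f : Lp ℂ 2 μX) :
    gwA hHaar k f = (2⁻¹ : ℂ) • (f + gwT μX hHaar (gwDelta k) f) := by
  simp [gwA]

lemma norm_gwA_le (k : ℕ) (f : Lp ℂ 2 μX) : ‖gwA hHaar k f‖ ≤ ‖f‖ := by
  rw [gwA_apply, norm_smul]
  have h1 : ‖f + gwT μX hHaar (gwDelta k) f‖ ≤ ‖f‖ + ‖f‖ :=
    (norm_add_le _ _).trans (by rw [norm_gwT])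
  have h2 : ‖(2⁻¹ : ℂ)‖ = 2⁻¹ := by norm_num
  rw [h2]
  nlinarith [norm_nonneg f]

lemma gwT_chiLp (k : ℕ) (S : Finset ℕ) :
    gwT μX hHaar (gwDelta k) (chiLp μX S)
      = (if k ∈ S then (-1 : ℂ) else 1) • chiLp μX S := by
  apply Lp.ext
  refine (coeFn_gwT μX hHaar (gwDelta k) (chiLp μX S)).trans ?_
  refine EventuallyEq.trans ?_ (Lp.coeFn_smul _ _).symm
  have hcomp := (gwMP μX hHaar (gwDelta k)).quasiMeasurePreserving.ae_eq_comp (coeFn_chiLp μX S)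
  filter_upwards [hcomp, coeFn_chiLp μX S] with x h1 h2
  simp only [Pi.smul_apply, smul_eq_mul]
  have h1' : (↑(chiLp μX S) : GWX → ℂ) (x + gwDelta k) = gwchi S (x + gwDelta k) := h1
  rw [h1', h2, gwchi_add_delta]

lemma gwA_chiLp (k : ℕ) (S : Finset ℕ) :
    gwA hHaar k (chiLp μX S) = if k ∈ S then 0 else chiLp μX S := by
  rw [gwA_apply, gwT_chiLp]
  by_cases hk : k ∈ S
  · rw [if_pos hk, if_pos hk, neg_one_smul]
    rw [add_neg_cancel, smul_zero]
  · rw [if_neg hk, if_neg hk, one_smul, ← two_smul ℂ, smul_smul]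
    norm_num

/-- The iterated averaging operator `B_n = A_{n-1} ∘ ⋯ ∘ A_0`. -/
def gwB : ℕ → (Lp ℂ 2 μX →ₗ[ℂ] Lp ℂ 2 μX)
  | 0 => LinearMap.id
  | n+1 => (gwA hHaar n).comp (gwB n)

lemma norm_gwB_le (n : ℕ) (f : Lp ℂ 2 μX) : ‖gwB hHaar n f‖ ≤ ‖f‖ := by
  induction n with
  | zero => simp [gwB]
  | succ n ih => exact le_trans (norm_gwA_le hHaar n _) ih

lemma gwB_chiLp_disj (n : ℕ) (S : Finset ℕ) (h : ∀ j ∈ S, ¬ j < n) :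
    gwB hHaar n (chiLp μX S) = chiLp μX S := by
  induction n with
  | zero => simp [gwB]
  | succ n ih =>
      have hn : ∀ j ∈ S, ¬ j < n := fun j hj => fun hlt => h j hj (by omega)
      show gwA hHaar n (gwB hHaar n (chiLp μX S)) = chiLp μX S
      rw [ih hn, gwA_chiLp, if_neg (fun hn' => h n hn' (by omega))]

lemma gwB_chiLp_hit (n : ℕ) (S : Finset ℕ) (h : ∃ j ∈ S, j < n) :
    gwB hHaar n (chiLp μX S) = 0 := by
  induction n with
  | zero => obtain ⟨j, _, hj⟩ := h; omega
  | succ n ih =>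
      show gwA hHaar n (gwB hHaar n (chiLp μX S)) = 0
      by_cases hex : ∃ j ∈ S, j < n
      · rw [ih hex, map_zero]
      · push_neg at hex
        obtain ⟨j, hjS, hjn⟩ := h
        have hjn' : j = n := by have := hex j hjS; omega
        rw [gwB_chiLp_disj hHaar n S (fun i hi hilt => absurd hilt (by have := hex i hi; omega)),
          gwA_chiLp, if_pos (hjn' ▸ hjS)]

end Averaging

section Density

variable (μX : Measure GWX) [IsProbabilityMeasure μX]

def gwCyl : Set (Set GWX) :=
  {A | ∃ (F : Finset ℕ) (e : ℕ → ZMod 2), A = {x : GWX | ∀ i ∈ F, x i = e i}}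

lemma gwCyl_measurableSet {A : Set GWX} (hA : A ∈ gwCyl) : MeasurableSet A := by
  obtain ⟨F, e, rfl⟩ := hA
  have : {x : GWX | ∀ i ∈ F, x i = e i} = ⋂ i ∈ F, {x : GWX | x i = e i} := by ext x; simp
  rw [this]
  refine MeasurableSet.biInter F.countable_toSet fun i _ => ?_
  have h2 : {x : GWX | x i = e i} = (fun x : GWX => x i) ⁻¹' {e i} := rfl
  rw [h2]
  exact measurable_pi_apply i (MeasurableSet.singleton (e i))

lemma gwCyl_isPiSystem : IsPiSystem gwCyl := by
  rintro A ⟨F1, e1, rfl⟩ B ⟨F2, e2, rfl⟩ hne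
  obtain ⟨z, hz1, hz2⟩ := hne
  refine ⟨F1 ∪ F2, fun i => if i ∈ F1 then e1 i else e2 i, ?_⟩
  ext x
  simp only [Set.mem_inter_iff, Set.mem_setOf_eq, Finset.mem_union]
  constructor
  · rintro ⟨h1, h2⟩ i hi
    by_cases hiF1 : i ∈ F1
    · rw [if_pos hiF1]; exact h1 i hiF1
    · rw [if_neg hiF1]; exact h2 i (hi.resolve_left hiF1)
  · intro hx
    constructor
    · intro i hi
      have := hx i (Or.inl hi); rwa [if_pos hi] at this
    · intro i hi
      have h := hx i (Or.inr hi)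
      by_cases hiF1 : i ∈ F1
      · rw [if_pos hiF1] at h
        rw [h, ← hz2 i hi]
        exact (hz1 i hiF1).symm
      · rwa [if_neg hiF1] at h

lemma gw_generateFrom :
    (inferInstance : MeasurableSpace GWX) = MeasurableSpace.generateFrom gwCyl := by
  refine le_antisymm ?_ (MeasurableSpace.generateFrom_le fun A hA => gwCyl_measurableSet hA)
  have hle : MeasurableSpace.pi ≤ MeasurableSpace.generateFrom gwCyl := by
    refine iSup_le fun i => ?_
    rw [MeasurableSpace.comap_le_iff_le_map]
    intro s _
    show MeasurableSet[MeasurableSpace.generateFrom gwCyl] ((fun x : GWX => x i) ⁻¹' s)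
    have hs : (fun x : GWX => x i) ⁻¹' s = ⋃ a ∈ s, {x : GWX | x i = a} := by
      ext x; simp
    rw [hs]
    refine @MeasurableSet.biUnion GWX (ZMod 2) (MeasurableSpace.generateFrom gwCyl) _ _
      (Set.to_countable s) fun a _ => ?_
    exact MeasurableSpace.measurableSet_generateFrom ⟨{i}, fun _ => a, by ext x; simp⟩
  exact hle

lemma gw_indicator_expand (F : Finset ℕ) (e : ℕ → ZMod 2) (h : GWX → ℂ) (x : GWX) :
    ({y : GWX | ∀ i ∈ F, y i = e i}).indicator h x
      = ∑ T ∈ F.powerset,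
          ((∏ i ∈ T, ((2:ℂ)⁻¹ * (-1:ℂ) ^ ((e i).val))) * (2:ℂ)⁻¹ ^ ((F \ T).card))
            * (gwchi T x * h x) := by
  have step1 : ({y : GWX | ∀ i ∈ F, y i = e i}).indicator h x
      = (∏ i ∈ F, ((2:ℂ)⁻¹ * ((-1:ℂ) ^ ((e i).val) * (-1:ℂ) ^ ((x i).val)) + (2:ℂ)⁻¹))
          * h x := by
    by_cases hx : ∀ i ∈ F, x i = e i
    · rw [Set.indicator_of_mem (show x ∈ {y : GWX | ∀ i ∈ F, y i = e i} from hx),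
        Finset.prod_eq_one, one_mul]
      intro i hi
      rw [hx i hi, zm_pow_sq]
      norm_num
    · rw [Set.indicator_of_notMem (show x ∉ {y : GWX | ∀ i ∈ F, y i = e i} from hx)]
      push_neg at hx
      obtain ⟨i, hiF, hine⟩ := hx
      rw [Finset.prod_eq_zero hiF, zero_mul]
      rw [zm_pow_ne (e i) (x i) (Ne.symm hine)]
      norm_num
  rw [step1, Finset.prod_add, Finset.sum_mul]
  refine Finset.sum_congr rfl fun T hT => ?_
  have hprod : (∏ i ∈ T, ((2:ℂ)⁻¹ * ((-1:ℂ) ^ ((e i).val) * (-1:ℂ) ^ ((x i).val))))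
      = (∏ i ∈ T, ((2:ℂ)⁻¹ * (-1:ℂ) ^ ((e i).val))) * gwchi T x := by
    rw [gwchi, ← Finset.prod_mul_distrib]
    exact Finset.prod_congr rfl fun i _ => by ring
  rw [hprod, Finset.prod_const]
  ring

lemma gw_dense_span :
    (Submodule.span ℂ (Set.range (chiLp μX))).topologicalClosure = ⊤ := by
  rw [Submodule.topologicalClosure_eq_top_iff, Submodule.eq_bot_iff]
  intro h hh
  have horth : ∀ S : Finset ℕ, (inner ℂ (chiLp μX S) h : ℂ) = 0 := fun S =>
    (Submodule.mem_orthogonal _ h).mp hh _ (Submodule.subset_span (Set.mem_range_self S))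
  have key : ∀ S : Finset ℕ, ∫ x, gwchi S x * (h : GWX → ℂ) x ∂μX = 0 := fun S => by
    rw [← inner_chiLp]; exact horth S
  have hint : Integrable (h : GWX → ℂ) μX := (Lp.memLp h).integrable one_le_two
  have hall : ∀ ⦃A : Set GWX⦄, MeasurableSet A → ∫ x in A, (h : GWX → ℂ) x ∂μX = 0 := by
    refine MeasurableSpace.induction_on_inter
      (C := fun A _ => ∫ x in A, (h : GWX → ℂ) x ∂μX = 0)
      gw_generateFrom gwCyl_isPiSystem ?_ ?_ ?_ ?_
    · simp
    · rintro A ⟨F, e, rfl⟩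
      have hAm : MeasurableSet {x : GWX | ∀ i ∈ F, x i = e i} :=
        gwCyl_measurableSet ⟨F, e, rfl⟩
      rw [← integral_indicator hAm]
      calc ∫ x, ({y : GWX | ∀ i ∈ F, y i = e i}).indicator (h : GWX → ℂ) x ∂μX
          = ∫ x, ∑ T ∈ F.powerset,
              ((∏ i ∈ T, ((2:ℂ)⁻¹ * (-1:ℂ) ^ ((e i).val))) * (2:ℂ)⁻¹ ^ ((F \ T).card))
                * (gwchi T x * (h : GWX → ℂ) x) ∂μX :=
            integral_congr_ae (ae_of_all _ fun x => gw_indicator_expand F e _ x)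
        _ = ∑ T ∈ F.powerset,
              ∫ x, ((∏ i ∈ T, ((2:ℂ)⁻¹ * (-1:ℂ) ^ ((e i).val))) * (2:ℂ)⁻¹ ^ ((F \ T).card))
                * (gwchi T x * (h : GWX → ℂ) x) ∂μX :=
            integral_finset_sum _ fun T _ => (integrable_chi_mul μX T h).const_mul _
        _ = 0 := by
            refine Finset.sum_eq_zero fun T _ => ?_
            rw [integral_const_mul, key T, mul_zero]
    · intro t htm hzero
      have htotal : ∫ x, (h : GWX → ℂ) x ∂μX = 0 := by
        have hk := key ∅
        refine Eq.trans ?_ hk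
        refine integral_congr_ae (ae_of_all _ fun x => ?_)
        show (h : GWX → ℂ) x = gwchi ∅ x * (h : GWX → ℂ) x
        simp [gwchi]
      have hsum := integral_add_compl htm hint
      linear_combination hsum - hzero + htotal
    · intro g hdisj hmeas hzero
      rw [integral_iUnion hmeas hdisj hint.integrableOn]
      simp [hzero]
  have hae : (h : GWX → ℂ) =ᵐ[μX] 0 :=
    ae_eq_zero_of_forall_setIntegral_eq_of_sigmaFinite
      (fun s _ _ => hint.integrableOn) (fun s hs _ => hall hs)
  exact Lp.ext (hae.trans (Lp.coeFn_zero ℂ 2 μX).symm)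

end Density

section Final

variable {μX : Measure GWX} [IsProbabilityMeasure μX]
  (hHaar : ∀ y : GWX, μX.map (· + y) = μX)
  {J J' : ℕ → Lp ℂ 2 μX → Lp ℂ 2 μX}
  (hJ : ∀ k f, (↑(J k f) : GWX → ℂ) =ᵐ[μX] fun x =>
    gwSign k x * Complex.I * gwC k x * (↑f : GWX → ℂ) (x + gwDelta k))
  (hJ' : ∀ k f, (↑(J' k f) : GWX → ℂ) =ᵐ[μX] fun x =>
    (-1 : ℂ) ^ (x k).val * Complex.I * (↑(J k f) : GWX → ℂ) x)
  (V : Submodule ℂ (Lp ℂ 2 μX))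
  (hVinv : ∀ k : ℕ, ∀ f ∈ V, J k f ∈ V ∧ J' k f ∈ V)

include hHaar hJ hJ' hVinv in
lemma gwA_mem (k : ℕ) {f : Lp ℂ 2 μX} (hf : f ∈ V) : gwA hHaar k f ∈ V := by
  rw [gwA_apply]
  exact V.smul_mem _ (V.add_mem hf (gw_mem_T hHaar hJ hJ' V hVinv k hf))

include hHaar hJ hJ' hVinv in
lemma gwB_mem (n : ℕ) {f : Lp ℂ 2 μX} (hf : f ∈ V) : gwB hHaar n f ∈ V := by
  induction n with
  | zero => exact hf
  | succ n ih => exact gwA_mem hHaar hJ hJ' V hVinv n ih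

include hHaar in
lemma inner_one_chiLp (S : Finset ℕ) :
    (inner ℂ (chiLp μX ∅) (chiLp μX S) : ℂ) = if S = ∅ then 1 else 0 := by
  rw [inner_chiLp, ← integral_chi μX hHaar S]
  refine integral_congr_ae ?_
  filter_upwards [coeFn_chiLp μX S] with x hx
  show gwchi ∅ x * _ = gwchi S x
  rw [hx]
  simp [gwchi]

include hHaar in
lemma gwB_span_eventually (u : Lp ℂ 2 μX)
    (hu : u ∈ Submodule.span ℂ (Set.range (chiLp μX))) :
    ∃ N : ℕ, ∀ n ≥ N, gwB hHaar n u = (inner ℂ (chiLp μX ∅) u : ℂ) • chiLp μX ∅ := by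
  induction hu using Submodule.span_induction with
  | mem u hu =>
      obtain ⟨S, rfl⟩ := hu
      by_cases hS : S = ∅
      · subst hS
        refine ⟨0, fun n _ => ?_⟩
        rw [gwB_chiLp_disj hHaar n ∅ (by simp), inner_one_chiLp hHaar, if_pos rfl, one_smul]
      · obtain ⟨j, hj⟩ := Finset.nonempty_iff_ne_empty.mpr hS
        refine ⟨j + 1, fun n hn => ?_⟩
        rw [gwB_chiLp_hit hHaar n S ⟨j, hj, by omega⟩, inner_one_chiLp hHaar, if_neg hS,
          zero_smul]
  | zero => exact ⟨0, fun n _ => by simp⟩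
  | add u v hu hv h1 h2 =>
      obtain ⟨N1, h1⟩ := h1
      obtain ⟨N2, h2⟩ := h2
      refine ⟨max N1 N2, fun n hn => ?_⟩
      rw [map_add, h1 n (le_trans (le_max_left _ _) hn), h2 n (le_trans (le_max_right _ _) hn),
        inner_add_right, add_smul]
  | smul a u hu h1 =>
      obtain ⟨N, h1⟩ := h1
      refine ⟨N, fun n hn => ?_⟩
      rw [LinearMap.map_smul, h1 n hn, inner_smul_right, smul_smul]

end Final


/-- with the `c_k` of Theorem 3.11 and `μ_X` the Haar probability measure on
`X` (characterized as a translation-invariant probability measure), the representation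
`(J_k f)(x) = (-1)^{x_1+⋯+x_{k-1}+1} i c_k(x) f(x+δ_k)`,
`(J'_k f)(x) = (-1)^{x_k} i (J_k f)(x)` on `L²(X, μ_X; ℂ)` is irreducible over `ℂ`. -/
theorem gwC_representation_irreducible_complex
    (μX : Measure GWX) [IsProbabilityMeasure μX]
    (hHaar : ∀ y : GWX, μX.map (· + y) = μX)
    (J J' : ℕ → Lp ℂ 2 μX → Lp ℂ 2 μX)
    (hJ : ∀ k f, (↑(J k f) : GWX → ℂ) =ᵐ[μX] fun x =>
      gwSign k x * Complex.I * gwC k x * (↑f : GWX → ℂ) (x + gwDelta k))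
    (hJ' : ∀ k f, (↑(J' k f) : GWX → ℂ) =ᵐ[μX] fun x =>
      (-1 : ℂ) ^ (x k).val * Complex.I * (↑(J k f) : GWX → ℂ) x) :
    ∀ V : Submodule ℂ (Lp ℂ 2 μX), IsClosed (V : Set (Lp ℂ 2 μX)) →
      (∀ k : ℕ, ∀ f ∈ V, J k f ∈ V ∧ J' k f ∈ V) →
      V = ⊥ ∨ V = ⊤ := by
  intro V hVc hVinv
  by_cases hbot : V = ⊥
  · exact Or.inl hbot
  right
  obtain ⟨f, hfV, hfne⟩ := Submodule.exists_mem_ne_zero_of_ne_bot hbot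
  -- find a character with nonzero inner product with f
  have hS : ∃ S : Finset ℕ, (inner ℂ (chiLp μX S) f : ℂ) ≠ 0 := by
    by_contra hno
    push_neg at hno
    have hforth : f ∈ (Submodule.span ℂ (Set.range (chiLp μX)))ᗮ := by
      rw [Submodule.mem_orthogonal]
      intro u hu
      induction hu using Submodule.span_induction with
      | mem u hu => obtain ⟨S, rfl⟩ := hu; exact hno S
      | zero => simp
      | add u v hu hv h1 h2 => rw [inner_add_left, h1, h2, add_zero]
      | smul a u hu h1 => rw [inner_smul_left, h1, mul_zero]
    rw [Submodule.topologicalClosure_eq_top_iff.mp (gw_dense_span μX)] at hforth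
    exact hfne (Submodule.mem_bot ℂ |>.mp hforth)
  obtain ⟨S, hSne⟩ := hS
  set f' := mulLp μX (gwchi_measurable' S) (gwchi_norm' S) f with hf'def
  have hf'V : f' ∈ V := gw_mem_chi hHaar hJ hJ' V hVinv S hfV
  have hc : (inner ℂ (chiLp μX ∅) f' : ℂ) = inner ℂ (chiLp μX S) f := by
    rw [inner_chiLp, inner_chiLp]
    refine integral_congr_ae ?_
    filter_upwards [coeFn_mulLp μX (gwchi_measurable' S) (gwchi_norm' S) f] with x hx
    show gwchi ∅ x * _ = gwchi S x * _
    rw [hf'def, hx]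
    simp [gwchi]
  set c : ℂ := inner ℂ (chiLp μX ∅) f' with hcdef
  have hcne : c ≠ 0 := by rw [hc]; exact hSne
  -- the constant function 1 belongs to V
  have hone : chiLp μX ∅ ∈ V := by
    have hmem : c • chiLp μX ∅ ∈ closure (V : Set (Lp ℂ 2 μX)) := by
      rw [Metric.mem_closure_iff]
      intro ε hε
      -- approximate f' by an element of the span
      have hf'cl : f' ∈ closure ((Submodule.span ℂ (Set.range (chiLp μX)) : Submodule ℂ _) :
          Set (Lp ℂ 2 μX)) := by
        have : f' ∈ (Submodule.span ℂ (Set.range (chiLp μX))).topologicalClosure := by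
          rw [gw_dense_span μX]; trivial
        exact this
      rw [Metric.mem_closure_iff] at hf'cl
      obtain ⟨g, hgspan, hgdist⟩ := hf'cl (ε / 4) (by linarith)
      rw [dist_eq_norm] at hgdist
      obtain ⟨N, hN⟩ := gwB_span_eventually hHaar g hgspan
      refine ⟨gwB hHaar N f', gwB_mem hHaar hJ hJ' V hVinv N hf'V, ?_⟩
      have hBg := hN N le_rfl
      have hnorm1 : ‖chiLp μX ∅‖ = 1 := norm_chiLp_empty μX
      have hterm1 : ‖c • chiLp μX ∅ - (inner ℂ (chiLp μX ∅) g : ℂ) • chiLp μX ∅‖ ≤ ε / 4 := by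
        rw [← sub_smul, norm_smul, hnorm1, mul_one, hcdef, ← inner_sub_right]
        calc ‖(inner ℂ (chiLp μX ∅) (f' - g) : ℂ)‖ ≤ ‖chiLp μX ∅‖ * ‖f' - g‖ :=
              norm_inner_le_norm _ _
          _ ≤ ε / 4 := by rw [hnorm1, one_mul]; linarith
      have hterm2 : ‖(inner ℂ (chiLp μX ∅) g : ℂ) • chiLp μX ∅ - gwB hHaar N f'‖ ≤ ε / 4 := by
        rw [← hBg, ← map_sub]
        calc ‖gwB hHaar N (g - f')‖ ≤ ‖g - f'‖ := norm_gwB_le hHaar N _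
          _ ≤ ε / 4 := by rw [norm_sub_rev]; linarith
      calc dist (c • chiLp μX ∅) (gwB hHaar N f')
          ≤ dist (c • chiLp μX ∅) (gwB hHaar N g) + dist (gwB hHaar N g) (gwB hHaar N f') :=
            dist_triangle _ _ _
        _ ≤ ε / 4 + ε / 4 := by
            rw [dist_eq_norm, dist_eq_norm, hBg]
            exact add_le_add hterm1 hterm2
        _ < ε := by linarith
    rw [hVc.closure_eq] at hmem
    have := V.smul_mem c⁻¹ hmem
    rwa [smul_smul, inv_mul_cancel₀ hcne, one_smul] at this
  -- all characters belong to V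
  have hchiV : ∀ T : Finset ℕ, chiLp μX T ∈ V := by
    intro T
    have heq : chiLp μX T = mulLp μX (gwchi_measurable' T) (gwchi_norm' T) (chiLp μX ∅) := by
      apply Lp.ext
      refine (coeFn_chiLp μX T).trans ?_
      refine EventuallyEq.trans ?_ (coeFn_mulLp μX _ _ _).symm
      filter_upwards [coeFn_chiLp μX ∅] with x hx
      show gwchi T x = gwchi T x * _
      rw [hx]
      simp [gwchi]
    rw [heq]
    exact gw_mem_chi hHaar hJ hJ' V hVinv T hone
  have hspan_le : Submodule.span ℂ (Set.range (chiLp μX)) ≤ V :=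
    Submodule.span_le.mpr (by rintro u ⟨T, rfl⟩; exact hchiV T)
  have htop := Submodule.topologicalClosure_minimal _ hspan_le hVc
  rw [gw_dense_span μX] at htop
  exact eq_top_iff.mpr htop
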